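/- arXiv:2009.01402 — 6 statements merged into one kernel-verified Lean document; each statement's English description precedes it below -/
import Mathlib

section
/- Stern's diatomic sequence s, defined by s(0)=0, s(1)=1, s(2n)=s(n), s(2n+1)=s(n)+s(n+1), satisfies: every element of its 2-kernel is a ℤ-linear combination of the two sequences (s(n))_{n≥0} and (s(n+1))_{n≥0}. More precisely, for all ℓ ≥ 0 and 0 ≤ r < 2^ℓ, there exist integers a, b ≥ 0 with s(2^ℓ n + r) = a·s(n) + b·s(n+1) for all n. -/
/-- Every element of the 2-kernel of Stern's diatomic sequence is a nonnegative
integer linear combination of `(s n)` and `(s (n+1))`. -/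
theorem stern_kernel_linear_combination (s : ℕ → ℕ)
    (h0 : s 0 = 0) (h1 : s 1 = 1)
    (heven : ∀ n, 1 ≤ n → s (2 * n) = s n)
    (hodd : ∀ n, 1 ≤ n → s (2 * n + 1) = s n + s (n + 1)) :
    ∀ ℓ r : ℕ, r < 2 ^ ℓ →
      ∃ a b : ℕ, ∀ n, s (2 ^ ℓ * n + r) = a * s n + b * s (n + 1) := by
  have heven' : ∀ m, s (2 * m) = s m := by
    intro m
    rcases Nat.eq_zero_or_pos m with hm | hm
    · simp [hm]
    · exact heven m hm
  have hodd' : ∀ m, s (2 * m + 1) = s m + s (m + 1) := by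
    intro m
    rcases Nat.eq_zero_or_pos m with hm | hm
    · simp [hm, h0, h1]
    · exact hodd m hm
  have key : ∀ ℓ r : ℕ, r ≤ 2 ^ ℓ →
      ∃ a b : ℕ, ∀ n, s (2 ^ ℓ * n + r) = a * s n + b * s (n + 1) := by
    intro ℓ
    induction ℓ with
    | zero =>
      intro r hr
      interval_cases r
      · exact ⟨1, 0, fun n => by simp⟩
      · exact ⟨0, 1, fun n => by simp⟩
    | succ ℓ ih =>
      intro r hr
      rcases Nat.even_or_odd r with ⟨r', rfl⟩ | ⟨r', rfl⟩
      · have hr' : r' ≤ 2 ^ ℓ := by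
          rw [pow_succ] at hr; omega
        obtain ⟨a, b, hab⟩ := ih r' hr'
        refine ⟨a, b, fun n => ?_⟩
        have h2 : 2 ^ (ℓ + 1) * n + (r' + r') = 2 * (2 ^ ℓ * n + r') := by ring
        rw [h2, heven', hab]
      · have hr1 : r' + 1 ≤ 2 ^ ℓ := by
          rw [pow_succ] at hr; omega
        obtain ⟨a, b, hab⟩ := ih r' (by omega)
        obtain ⟨c, d, hcd⟩ := ih (r' + 1) hr1
        refine ⟨a + c, b + d, fun n => ?_⟩
        have h2 : 2 ^ (ℓ + 1) * n + (2 * r' + 1) = 2 * (2 ^ ℓ * n + r') + 1 := by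
          ring
        rw [h2, hodd']
        have h3 : 2 ^ ℓ * n + r' + 1 = 2 ^ ℓ * n + (r' + 1) := by ring
        rw [h3, hab, hcd]; ring
  intro ℓ r hrlt
  exact key ℓ r (le_of_lt hrlt)
end

section
/- Let (Sₙ)_{n≥1} be a sequence of d×d complex-matrix-valued continuous functions on ℝ such that each Sₙ(0) is a Markov (row-stochastic) matrix, ‖Sₙ(t)‖_∞ ≤ 1 for all t, and there exist δ > 0 and a summable sequence (εₙ) with ‖Sₙ(t) - Sₙ(0)‖_∞ ≤ εₙ whenever |t| < δ. Then the partial products S^{(m)}(t) = S_m(t/k^m)⋯S₁(t/k) (for fixed k ≥ 2) satisfy: the family {S^{(m,ℓ)}(t)}, with S^{(m,ℓ)}(t) = S_m(t/k^m)⋯S_ℓ(t/k^ℓ), is equicontinuous at t = 0, with ‖S^{(m,ℓ)}(t) - S^{(m,ℓ)}(0)‖_∞ ≤ Σ_{j≥0} ε_{j+1} whenever |t| < δ. -/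
open scoped BigOperators

/-- The maximum-row-sum norm `‖A‖_∞` of a complex matrix. -/
noncomputable def matrixInfNorm {d : ℕ} (A : Matrix (Fin d) (Fin d) ℂ) : ℝ :=
  ⨆ i : Fin d, ∑ j, ‖A i j‖

/-- A complex matrix is Markov if its entries are nonnegative reals and each
row sums to `1`. -/
def IsMarkovC {d : ℕ} (A : Matrix (Fin d) (Fin d) ℂ) : Prop :=
  (∀ i j, (A i j).im = 0 ∧ 0 ≤ (A i j).re) ∧ ∀ i, ∑ j, A i j = 1

/-- The (descending) partial product `S^{(m,ℓ)}(t) = S_m(t/k^m) ⋯ S_ℓ(t/k^ℓ)`. -/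
noncomputable def partialProd {d : ℕ} (S : ℕ → ℝ → Matrix (Fin d) (Fin d) ℂ)
    (k : ℕ) (m ℓ : ℕ) (t : ℝ) : Matrix (Fin d) (Fin d) ℂ :=
  (List.ofFn (fun r : Fin (m - ℓ + 1) => S (m - (r : ℕ)) (t / (k : ℝ) ^ (m - (r : ℕ))))).prod

section Aux

attribute [local instance] Matrix.linftyOpNormedRing Matrix.linftyOpNormedAlgebra

lemma matrixInfNorm_eq_norm {d : ℕ} (A : Matrix (Fin d) (Fin d) ℂ) :
    matrixInfNorm A = ‖A‖ := by
  rcases Nat.eq_zero_or_pos d with hd | hd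
  · subst hd
    rw [matrixInfNorm, Real.iSup_of_isEmpty, Matrix.linfty_opNorm_def]
    simp
  · haveI : Nonempty (Fin d) := ⟨⟨0, hd⟩⟩
    rw [Matrix.linfty_opNorm_def, matrixInfNorm]
    rw [← Finset.sup'_eq_sup Finset.univ_nonempty _,
      Finset.comp_sup'_eq_sup'_comp Finset.univ_nonempty NNReal.toReal
        (fun x y => by simp),
      Finset.sup'_univ_eq_ciSup]
    congr 1
    ext i
    simp [Function.comp, NNReal.coe_sum]

lemma norm_listProd_le {d : ℕ} (hd : 0 < d) (L : List (Matrix (Fin d) (Fin d) ℂ))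
    (h : ∀ A ∈ L, ‖A‖ ≤ 1) : ‖L.prod‖ ≤ 1 := by
  haveI : Nonempty (Fin d) := ⟨⟨0, hd⟩⟩
  induction L with
  | nil => simp
  | cons A L ih =>
    rw [List.prod_cons]
    calc ‖A * L.prod‖ ≤ ‖A‖ * ‖L.prod‖ := norm_mul_le _ _
    _ ≤ 1 * 1 := by
        apply mul_le_mul (h A (by simp)) (ih fun B hB => h B (by simp [hB]))
          (norm_nonneg _) zero_le_one
    _ = 1 := one_mul 1

lemma norm_prod_sub_prod {d : ℕ} (hd : 0 < d) (n : ℕ)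
    (A B : Fin n → Matrix (Fin d) (Fin d) ℂ)
    (hA : ∀ i, ‖A i‖ ≤ 1) (hB : ∀ i, ‖B i‖ ≤ 1) :
    ‖(List.ofFn A).prod - (List.ofFn B).prod‖ ≤ ∑ i, ‖A i - B i‖ := by
  induction n with
  | zero => simp
  | succ n ih =>
    rw [List.ofFn_succ, List.ofFn_succ, List.prod_cons, List.prod_cons]
    set P := (List.ofFn fun i => A (Fin.succ i)).prod
    set Q := (List.ofFn fun i => B (Fin.succ i)).prod
    have key : A 0 * P - B 0 * Q = A 0 * (P - Q) + (A 0 - B 0) * Q := by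
      rw [mul_sub, sub_mul]; abel
    have hQ : ‖Q‖ ≤ 1 := by
      apply norm_listProd_le hd
      intro M hM
      obtain ⟨i, rfl⟩ := List.mem_ofFn.mp hM
      exact hB _
    calc ‖A 0 * P - B 0 * Q‖ = ‖A 0 * (P - Q) + (A 0 - B 0) * Q‖ := by rw [key]
    _ ≤ ‖A 0 * (P - Q)‖ + ‖(A 0 - B 0) * Q‖ := norm_add_le _ _
    _ ≤ ‖A 0‖ * ‖P - Q‖ + ‖A 0 - B 0‖ * ‖Q‖ :=
        add_le_add (norm_mul_le _ _) (norm_mul_le _ _)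
    _ ≤ 1 * ‖P - Q‖ + ‖A 0 - B 0‖ * 1 :=
        add_le_add (mul_le_mul_of_nonneg_right (hA 0) (norm_nonneg _))
          (mul_le_mul_of_nonneg_left hQ (norm_nonneg _))
    _ = ‖P - Q‖ + ‖A 0 - B 0‖ := by ring
    _ ≤ (∑ i, ‖A (Fin.succ i) - B (Fin.succ i)‖) + ‖A 0 - B 0‖ :=
        add_le_add (ih _ _ (fun i => hA _) (fun i => hB _)) le_rfl
    _ = ∑ i, ‖A i - B i‖ := by rw [Fin.sum_univ_succ]; ring

/-- Equicontinuity at `t = 0` of the partial products `S^{(m,ℓ)}`: if each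
`Sₙ(0)` is Markov, `‖Sₙ(t)‖_∞ ≤ 1` everywhere, and `‖Sₙ(t) − Sₙ(0)‖_∞ ≤ εₙ`
for `|t| < δ` with `(εₙ)` summable, then
`‖S^{(m,ℓ)}(t) − S^{(m,ℓ)}(0)‖_∞ ≤ Σ_{j≥0} ε_{j+1}` for `|t| < δ`. -/
theorem partial_products_equicontinuous {d k : ℕ} (hk : 2 ≤ k)
    (S : ℕ → ℝ → Matrix (Fin d) (Fin d) ℂ)
    (hcont : ∀ n, Continuous (S n))
    (hMarkov : ∀ n, IsMarkovC (S n 0))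
    (hnorm : ∀ n t, matrixInfNorm (S n t) ≤ 1)
    (δ : ℝ) (hδ : 0 < δ) (ε : ℕ → ℝ) (hε : Summable ε)
    (hclose : ∀ n : ℕ, ∀ t : ℝ, |t| < δ → matrixInfNorm (S n t - S n 0) ≤ ε n) :
    ∀ m ℓ : ℕ, 1 ≤ ℓ → ℓ ≤ m → ∀ t : ℝ, |t| < δ →
      matrixInfNorm (partialProd S k m ℓ t - partialProd S k m ℓ 0)
        ≤ ∑' j : ℕ, ε (j + 1) := by
  intro m ℓ hℓ hℓm t ht
  have hεnn : ∀ n, 0 ≤ ε n := fun n => by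
    have h0 := hclose n 0 (by simpa using hδ)
    rw [matrixInfNorm_eq_norm] at h0
    exact le_trans (norm_nonneg _) h0
  have hε' : Summable fun j => ε (j + 1) := by
    exact (summable_nat_add_iff 1).mpr hε
  rcases Nat.eq_zero_or_pos d with hd | hd
  · subst hd
    rw [matrixInfNorm, Real.iSup_of_isEmpty]
    exact tsum_nonneg fun j => hεnn _
  rw [matrixInfNorm_eq_norm]
  -- abbreviations
  set N := m - ℓ + 1 with hN
  have htdiv : ∀ n : ℕ, |t / (k:ℝ) ^ n| < δ := by
    intro n
    have hk1 : (1:ℝ) ≤ (k:ℝ) ^ n := one_le_pow₀ (by exact_mod_cast hk.trans' one_le_two)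
    have : |t / (k:ℝ) ^ n| ≤ |t| := by
      rw [abs_div, abs_of_nonneg (by positivity : (0:ℝ) ≤ (k:ℝ) ^ n)]
      exact div_le_self (abs_nonneg t) hk1
    exact lt_of_le_of_lt this ht
  have hzero : ∀ n : ℕ, (0:ℝ) / (k:ℝ) ^ n = 0 := fun n => zero_div _
  have step1 : ‖partialProd S k m ℓ t - partialProd S k m ℓ 0‖
      ≤ ∑ r : Fin N, ‖S (m - (r:ℕ)) (t / (k:ℝ) ^ (m - (r:ℕ))) - S (m - (r:ℕ)) 0‖ := by
    unfold partialProd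
    have := norm_prod_sub_prod hd N
      (fun r : Fin N => S (m - (r:ℕ)) (t / (k:ℝ) ^ (m - (r:ℕ))))
      (fun r : Fin N => S (m - (r:ℕ)) ((0:ℝ) / (k:ℝ) ^ (m - (r:ℕ))))
      (fun r => by rw [← matrixInfNorm_eq_norm]; exact hnorm _ _)
      (fun r => by rw [← matrixInfNorm_eq_norm]; exact hnorm _ _)
    simpa [hzero] using this
  have step2 : ∑ r : Fin N, ‖S (m - (r:ℕ)) (t / (k:ℝ) ^ (m - (r:ℕ))) - S (m - (r:ℕ)) 0‖
      ≤ ∑ r : Fin N, ε (m - (r:ℕ)) := by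
    apply Finset.sum_le_sum
    intro r _
    rw [← matrixInfNorm_eq_norm]
    exact hclose _ _ (htdiv _)
  -- now bound the finite sum of ε's by the tsum
  have hsub : ∀ r : Fin N, m - (r:ℕ) = (m - (r:ℕ) - 1) + 1 := by
    intro r
    have h1 : (r:ℕ) ≤ m - ℓ := Nat.lt_succ_iff.mp r.isLt
    have : ℓ ≤ m - (r:ℕ) := Nat.le_sub_of_add_le (by omega)
    omega
  have step3 : ∑ r : Fin N, ε (m - (r:ℕ)) ≤ ∑' j : ℕ, ε (j + 1) := by
    have hinj : Set.InjOn (fun r : ℕ => m - r - 1) ↑(Finset.range N) := by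
      intro a ha b hb hab
      simp only [Finset.coe_range, Set.mem_Iio] at ha hb
      dsimp only at hab
      omega
    calc ∑ r : Fin N, ε (m - (r:ℕ))
        = ∑ r ∈ Finset.range N, ε (m - r) := (Finset.sum_range fun r => ε (m - r)).symm
    _ = ∑ r ∈ Finset.range N, (fun j => ε (j + 1)) (m - r - 1) := by
        apply Finset.sum_congr rfl
        intro r hr
        simp only [Finset.mem_range] at hr
        have h := hsub ⟨r, hr⟩
        simp only [Fin.val_mk] at h
        dsimp only
        rw [← h]
    _ = ∑ j ∈ Finset.image (fun r => m - r - 1) (Finset.range N), ε (j + 1) := by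
        rw [Finset.sum_image (fun a ha b hb h => hinj ha hb h)]
    _ ≤ ∑' j : ℕ, ε (j + 1) := by
        exact Summable.sum_le_tsum _ (fun j _ => hεnn _) hε'
  exact step1.trans (step2.trans step3)

end Aux
end

section
/- With D and Σ_D as above, Σ_{m=2^n}^{2^n + 2^{n-1} - 1} D(m) = Σ_D(n-1) for all n ≥ 1. Consequently μ_{D,n}([0,1/2)) = Σ_D(n-1)/Σ_D(n). -/
open Finset

/-- The digit matrix `B₁` of Dumas' sequence. -/
def DumasB1 : Matrix (Fin 2) (Fin 2) ℤ := !![3, -3; 3, 3]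

/-- Dumas' 2-regular sequence `D m = e₁ᵀ B₁^{s₂ m} e₁`. -/
def DumasD (m : ℕ) : ℤ := (DumasB1 ^ ((Nat.digits 2 m).sum)) 0 0

/-- Sum of Dumas' sequence over the fundamental region `[2^n, 2^{n+1})`. -/
def DumasSigma (n : ℕ) : ℤ := ∑ m ∈ Finset.Ico (2 ^ n) (2 ^ (n + 1)), DumasD m

lemma dumas_digitsum_pow_add : ∀ j r : ℕ, r < 2 ^ j →
    (Nat.digits 2 (2 ^ j + r)).sum = (Nat.digits 2 r).sum + 1 := by
  intro j
  induction j with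
  | zero =>
    intro r hr
    interval_cases r
    simp
  | succ j ih =>
    intro r hr
    have hne : 2 ^ (j + 1) + r ≠ 0 := by positivity
    rw [Nat.digits_def' (by norm_num : 1 < 2) (Nat.pos_of_ne_zero hne)]
    have hmod : (2 ^ (j + 1) + r) % 2 = r % 2 := by
      omega
    have hdiv : (2 ^ (j + 1) + r) / 2 = 2 ^ j + r / 2 := by
      omega
    have hr2 : r / 2 < 2 ^ j := by omega
    rw [List.sum_cons, hmod, hdiv, ih _ hr2]
    rcases Nat.eq_zero_or_pos r with h0 | hpos
    · subst h0; simp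
    · rw [Nat.digits_def' (by norm_num : 1 < 2) hpos, List.sum_cons]
      omega

lemma dumasD_shift (k r : ℕ) (hr : r < 2 ^ k) :
    DumasD (2 ^ (k + 1) + r) = DumasD (2 ^ k + r) := by
  unfold DumasD
  rw [dumas_digitsum_pow_add (k + 1) r (lt_of_lt_of_le hr (by
        exact Nat.pow_le_pow_right (by norm_num) (Nat.le_succ k))),
      dumas_digitsum_pow_add k r hr]

/-- The sum of Dumas' sequence over the first half of the fundamental region
equals `Σ_D(n-1)`; consequently the mass that the approximant measure
`μ_{D,n}` assigns to `[0, 1/2)` equals `Σ_D(n-1)/Σ_D(n)`. -/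
theorem dumas_half_mass (n : ℕ) (hn : 1 ≤ n) (hS : DumasSigma n ≠ 0) :
    (∑ m ∈ Finset.Ico (2 ^ n) (2 ^ n + 2 ^ (n - 1)), DumasD m) = DumasSigma (n - 1) ∧
    (1 / (DumasSigma n : ℝ)) *
        (∑ m ∈ Finset.Ico (2 ^ n) (2 ^ n + 2 ^ (n - 1)), (DumasD m : ℝ))
      = (DumasSigma (n - 1) : ℝ) / (DumasSigma n : ℝ) := by
  obtain ⟨k, rfl⟩ : ∃ k, n = k + 1 := ⟨n - 1, by omega⟩
  have key : (∑ m ∈ Finset.Ico (2 ^ (k + 1)) (2 ^ (k + 1) + 2 ^ k), DumasD m)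
      = DumasSigma k := by
    rw [DumasSigma, Finset.sum_Ico_eq_sum_range, Finset.sum_Ico_eq_sum_range]
    have hp : 2 ^ (k + 1) = 2 * 2 ^ k := by ring
    have h1 : 2 ^ (k + 1) + 2 ^ k - 2 ^ (k + 1) = 2 ^ k := by omega
    have h2 : 2 ^ (k + 1) - 2 ^ k = 2 ^ k := by omega
    rw [h1, h2]
    exact Finset.sum_congr rfl fun r hr =>
      dumasD_shift k r (Finset.mem_range.mp hr)
  simp only [Nat.add_sub_cancel] at *
  refine ⟨key, ?_⟩
  have : (∑ m ∈ Finset.Ico (2 ^ (k + 1)) (2 ^ (k + 1) + 2 ^ k), (DumasD m : ℝ))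
      = (DumasSigma k : ℝ) := by
    rw [← Int.cast_sum, key]
  rw [this]
  ring
end

section
/- The angle θ = arccos(4/5) is an irrational multiple of π; equivalently, (4+3i)/5 is not a root of unity. -/
open Complex

noncomputable def auxPhi : GaussianInt →+* ZMod 5 := Zsqrtd.lift ⟨3, by decide⟩

lemma auxPhi_w : auxPhi ⟨4, 3⟩ = 3 := by
  show auxPhi (4 + 3 * Zsqrtd.sqrtd) = 3
  simp [auxPhi, Zsqrtd.lift]; decide

lemma auxPhi_five : auxPhi 5 = 0 := by
  have : (5 : GaussianInt) = ⟨5, 0⟩ := rfl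
  rw [this]
  show auxPhi (5 + 0 * Zsqrtd.sqrtd) = 0
  simp [auxPhi, Zsqrtd.lift]; decide

lemma aux_three_ne : (3 : ZMod 5) ≠ 0 := by decide

lemma aux_not_root_of_unity : ∀ n : ℕ, 0 < n → ((4 + 3 * I) / 5) ^ n ≠ 1 := by
  haveI : Fact (Nat.Prime 5) := ⟨by norm_num⟩
  intro n hn h
  rw [div_pow, div_eq_one_iff_eq (by norm_num : (5:ℂ)^n ≠ 0)] at h
  have hw : GaussianInt.toComplex ⟨4, 3⟩ = 4 + 3 * I := by
    simp [GaussianInt.toComplex_def]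
  have h5 : GaussianInt.toComplex 5 = 5 := by
    have : (5 : GaussianInt) = ⟨5, 0⟩ := rfl
    rw [this]; simp [GaussianInt.toComplex_def]
  have h2 : (⟨4, 3⟩ : GaussianInt) ^ n = 5 ^ n := by
    apply GaussianInt.toComplex_injective
    rw [map_pow, map_pow, hw, h5, h]
  have h3 := congrArg auxPhi h2
  rw [map_pow, map_pow, auxPhi_w, auxPhi_five, zero_pow hn.ne'] at h3
  exact pow_ne_zero n aux_three_ne h3

lemma aux_exp_form : (4 + 3*I)/5 = Complex.exp ((Real.arccos (4/5) : ℝ) * I) := by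
  rw [Complex.exp_mul_I, ← Complex.ofReal_cos, ← Complex.ofReal_sin,
    Real.cos_arccos (by norm_num) (by norm_num), Real.sin_arccos,
    show (1 : ℝ) - (4/5)^2 = (3/5)^2 by norm_num, Real.sqrt_sq (by norm_num)]
  push_cast
  ring

/-- The angle `θ = arccos (4/5)` is an irrational multiple of `π`;
equivalently, `(4+3i)/5` is not a root of unity. -/
theorem arccos_four_fifths_irrational_multiple_of_pi :
    (∀ q : ℚ, Real.arccos (4 / 5) ≠ (q : ℝ) * Real.pi) ∧
    (∀ n : ℕ, 0 < n → ((4 + 3 * I) / 5) ^ n ≠ 1) := by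
  refine ⟨?_, aux_not_root_of_unity⟩
  intro q hq
  apply aux_not_root_of_unity (2 * q.den) (by positivity)
  rw [aux_exp_form, hq, ← Complex.exp_nat_mul]
  have hd : (q.den : ℝ) * (q : ℝ) = (q.num : ℝ) := by
    exact_mod_cast congrArg (Rat.cast : ℚ → ℝ)
      (by rw [mul_comm]; exact_mod_cast Rat.mul_den_eq_num q : (q.den : ℚ) * q = q.num)
  have key : ((2 * q.den : ℕ) : ℂ) * (((q : ℝ) * Real.pi : ℝ) * I)
      = (q.num : ℂ) * (2 * Real.pi * I) := by
    have hd' : ((q.den : ℝ) : ℂ) * ((q : ℝ) : ℂ) = ((q.num : ℝ) : ℂ) := by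
      exact_mod_cast congrArg (Complex.ofReal) hd
    push_cast at hd' ⊢
    linear_combination (2 * (Real.pi : ℂ) * I) * hd'
  rw [key]
  exact Complex.exp_int_mul_two_pi_mul_I q.num
end

section
/- Let A be a d×d row-stochastic matrix with all entries strictly positive (a primitive Markov matrix). Then Aⁿ converges as n → ∞ to a rank-one row-stochastic matrix P whose rows are all equal to the unique stationary distribution π of A; moreover P·M = M for any matrix M satisfying A·M = M. -/
open Filter

section Aux

variable {d : ℕ} [NeZero d]

private lemma pmpl_pow_entry_nonneg (A : Matrix (Fin d) (Fin d) ℝ)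
    (h : ∀ i j, 0 ≤ A i j) (n : ℕ) (i j : Fin d) : 0 ≤ (A ^ n) i j := by
  induction n generalizing i j with
  | zero =>
    rw [pow_zero]
    by_cases h' : i = j <;> simp [Matrix.one_apply, h']
  | succ n ih =>
    rw [pow_succ, Matrix.mul_apply]
    exact Finset.sum_nonneg fun k _ => mul_nonneg (ih i k) (h k j)

private lemma pmpl_pow_row_sum (A : Matrix (Fin d) (Fin d) ℝ)
    (hrow : ∀ i, ∑ j, A i j = 1) (n : ℕ) (i : Fin d) : ∑ j, (A ^ n) i j = 1 := by
  induction n generalizing i with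
  | zero => simp [Matrix.one_apply]
  | succ n ih =>
    simp only [pow_succ, Matrix.mul_apply]
    rw [Finset.sum_comm]
    simp [← Finset.mul_sum, hrow, ih]

private lemma pmpl_key (A : Matrix (Fin d) (Fin d) ℝ)
    (hpos : ∀ i j, 0 < A i j) (hrow : ∀ i, ∑ j, A i j = 1) (j : Fin d) :
    ∃ p : ℝ, ∀ i, Tendsto (fun n => (A ^ n) i j) atTop (nhds p) := by
  have hne : (Finset.univ : Finset (Fin d)).Nonempty := Finset.univ_nonempty
  obtain ⟨ε, hε0, hεle⟩ : ∃ ε : ℝ, 0 < ε ∧ ∀ i k, ε ≤ A i k := by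
    refine ⟨Finset.univ.inf' hne fun i => Finset.univ.inf' hne fun k => A i k, ?_, ?_⟩
    · rw [Finset.lt_inf'_iff]
      intro i _
      rw [Finset.lt_inf'_iff]
      exact fun k _ => hpos i k
    · intro i k
      exact le_trans (Finset.inf'_le _ (Finset.mem_univ i)) (Finset.inf'_le _ (Finset.mem_univ k))
  set x : ℕ → Fin d → ℝ := fun n i => (A ^ n) i j with hx
  set m : ℕ → ℝ := fun n => Finset.univ.inf' hne (x n) with hm
  set Mx : ℕ → ℝ := fun n => Finset.univ.sup' hne (x n) with hMx
  have hmM : ∀ n, m n ≤ Mx n := by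
    intro n
    obtain ⟨i0, -⟩ := hne
    exact le_trans (Finset.inf'_le _ (Finset.mem_univ i0))
      (Finset.le_sup' _ (Finset.mem_univ i0))
  have hrec : ∀ n i, x (n + 1) i = ∑ k, A i k * x n k := by
    intro n i
    simp only [hx, pow_succ', Matrix.mul_apply]
  have hup : ∀ n, Mx (n + 1) ≤ Mx n - ε * (Mx n - m n) := by
    intro n
    apply Finset.sup'_le
    intro i _
    obtain ⟨i0, -, hi0⟩ := Finset.exists_mem_eq_inf' hne (x n)
    have h1 : ∀ k, x n k ≤ Mx n := fun k => Finset.le_sup' (x n) (Finset.mem_univ k)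
    have h2 : A i i0 * (Mx n - x n i0) ≤ ∑ k, A i k * (Mx n - x n k) :=
      Finset.single_le_sum (f := fun k => A i k * (Mx n - x n k))
        (fun k _ => mul_nonneg (hpos i k).le (by linarith [h1 k])) (Finset.mem_univ i0)
    have h3 : ∑ k, A i k * (Mx n - x n k) = Mx n - ∑ k, A i k * x n k := by
      simp only [mul_sub, Finset.sum_sub_distrib, ← Finset.sum_mul, hrow i, one_mul]
    have h4 : ε * (Mx n - m n) ≤ A i i0 * (Mx n - x n i0) := by
      rw [← hi0]
      exact mul_le_mul (hεle i i0) le_rfl (by linarith [hmM n]) (hpos i i0).le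
    rw [hrec n i]
    linarith [h2, h3, h4]
  have hlo : ∀ n, m n + ε * (Mx n - m n) ≤ m (n + 1) := by
    intro n
    apply Finset.le_inf'
    intro i _
    obtain ⟨i1, -, hi1⟩ := Finset.exists_mem_eq_sup' hne (x n)
    have h1 : ∀ k, m n ≤ x n k := fun k => Finset.inf'_le (x n) (Finset.mem_univ k)
    have h2 : A i i1 * (x n i1 - m n) ≤ ∑ k, A i k * (x n k - m n) :=
      Finset.single_le_sum (f := fun k => A i k * (x n k - m n))
        (fun k _ => mul_nonneg (hpos i k).le (by linarith [h1 k])) (Finset.mem_univ i1)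
    have h3 : ∑ k, A i k * (x n k - m n) = (∑ k, A i k * x n k) - m n := by
      simp only [mul_sub, Finset.sum_sub_distrib, ← Finset.sum_mul, hrow i, one_mul]
    have h4 : ε * (Mx n - m n) ≤ A i i1 * (x n i1 - m n) := by
      rw [← hi1]
      exact mul_le_mul (hεle i i1) le_rfl (by linarith [hmM n]) (hpos i i1).le
    rw [hrec n i]
    linarith [h2, h3, h4]
  have hΔnn : ∀ n, 0 ≤ Mx n - m n := fun n => by linarith [hmM n]
  have hmono : Monotone m := by
    apply monotone_nat_of_le_succ
    intro n
    have := mul_nonneg hε0.le (hΔnn n)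
    linarith [hlo n]
  have hManti : Antitone Mx := by
    apply antitone_nat_of_succ_le
    intro n
    have := mul_nonneg hε0.le (hΔnn n)
    linarith [hup n]
  set c : ℝ := max (1 - 2 * ε) 0 with hc
  have hc0 : 0 ≤ c := le_max_right _ _
  have hc1 : c < 1 := max_lt (by linarith) one_pos
  have hstep : ∀ n, Mx (n + 1) - m (n + 1) ≤ c * (Mx n - m n) := by
    intro n
    have hexp : (1 - 2 * ε) * (Mx n - m n) =
        (Mx n - ε * (Mx n - m n)) - (m n + ε * (Mx n - m n)) := by ring
    have h1 : Mx (n + 1) - m (n + 1) ≤ (1 - 2 * ε) * (Mx n - m n) := by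
      rw [hexp]; linarith [hup n, hlo n]
    exact h1.trans (mul_le_mul_of_nonneg_right (le_max_left _ _) (hΔnn n))
  have hgeo : ∀ n, Mx n - m n ≤ (Mx 0 - m 0) * c ^ n := by
    intro n
    induction n with
    | zero => simp
    | succ n ih =>
      calc Mx (n + 1) - m (n + 1) ≤ c * (Mx n - m n) := hstep n
        _ ≤ c * ((Mx 0 - m 0) * c ^ n) := by
            exact mul_le_mul_of_nonneg_left ih hc0
        _ = (Mx 0 - m 0) * c ^ (n + 1) := by ring
  have hΔ0 : Tendsto (fun n => Mx n - m n) atTop (nhds 0) := by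
    have hg : Tendsto (fun n : ℕ => (Mx 0 - m 0) * c ^ n) atTop (nhds 0) := by
      simpa using (tendsto_pow_atTop_nhds_zero_of_lt_one hc0 hc1).const_mul (Mx 0 - m 0)
    exact squeeze_zero hΔnn hgeo hg
  have hbdd : BddAbove (Set.range m) := by
    refine ⟨Mx 0, ?_⟩
    rintro y ⟨n, rfl⟩
    exact (hmM n).trans (hManti (Nat.zero_le n))
  have hmlim : Tendsto m atTop (nhds (⨆ n, m n)) := tendsto_atTop_ciSup hmono hbdd
  have hMlim : Tendsto Mx atTop (nhds (⨆ n, m n)) := by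
    have : Tendsto (fun n => m n + (Mx n - m n)) atTop (nhds ((⨆ n, m n) + 0)) :=
      hmlim.add hΔ0
    simpa using this
  refine ⟨⨆ n, m n, fun i => ?_⟩
  exact tendsto_of_tendsto_of_tendsto_of_le_of_le hmlim hMlim
    (fun n => Finset.inf'_le (x n) (Finset.mem_univ i))
    (fun n => Finset.le_sup' (x n) (Finset.mem_univ i))

end Aux

/-- For a strictly positive row-stochastic matrix `A`, the powers `Aⁿ` converge
to the rank-one stochastic matrix `P` whose rows all equal the unique
stationary distribution `π` of `A`; moreover `P M = M` whenever `A M = M`. -/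
theorem primitive_markov_power_limit {d : ℕ} [NeZero d]
    (A : Matrix (Fin d) (Fin d) ℝ)
    (hpos : ∀ i j, 0 < A i j)
    (hrow : ∀ i, ∑ j, A i j = 1) :
    ∃ π : Fin d → ℝ,
      (∀ j, 0 ≤ π j) ∧ (∑ j, π j = 1) ∧
      Matrix.vecMul π A = π ∧
      (∀ π' : Fin d → ℝ, (∀ j, 0 ≤ π' j) → (∑ j, π' j = 1) →
        Matrix.vecMul π' A = π' → π' = π) ∧
      Tendsto (fun n : ℕ => A ^ n) atTop
        (nhds (Matrix.of fun (_ j : Fin d) => π j)) ∧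
      (∀ M : Matrix (Fin d) (Fin d) ℝ, A * M = M →
        (Matrix.of fun (_ j : Fin d) => π j) * M = M) := by
  have hA0 : ∀ i j, 0 ≤ A i j := fun i j => (hpos i j).le
  choose π hT using fun j => pmpl_key A hpos hrow j
  have i0 : Fin d := ⟨0, Nat.pos_of_ne_zero (NeZero.ne d)⟩
  have hsum : ∑ j, π j = 1 := by
    have h1 : Tendsto (fun n => ∑ j, (A ^ n) i0 j) atTop (nhds (∑ j, π j)) :=
      tendsto_finset_sum Finset.univ (fun j _ => hT j i0)
    have h2 : (fun n => ∑ j, (A ^ n) i0 j) = fun _ => (1 : ℝ) :=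
      funext fun n => pmpl_pow_row_sum A hrow n i0
    rw [h2] at h1
    exact tendsto_nhds_unique h1 tendsto_const_nhds
  refine ⟨π, ?_, hsum, ?_, ?_, ?_, ?_⟩
  · intro j
    exact ge_of_tendsto' (hT j i0) (fun n => pmpl_pow_entry_nonneg A hA0 n i0 j)
  · funext j
    have h1 : Tendsto (fun n => ∑ i, (A ^ n) i0 i * A i j) atTop
        (nhds (∑ i, π i * A i j)) :=
      tendsto_finset_sum Finset.univ (fun i _ => (hT i i0).mul_const _)
    have h2 : (fun n => ∑ i, (A ^ n) i0 i * A i j) = fun n => (A ^ (n + 1)) i0 j :=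
      funext fun n => by rw [pow_succ, Matrix.mul_apply]
    rw [h2] at h1
    have h3 : Tendsto (fun n => (A ^ (n + 1)) i0 j) atTop (nhds (π j)) :=
      (hT j i0).comp (tendsto_add_atTop_nat 1)
    have h4 : ∑ i, π i * A i j = π j := tendsto_nhds_unique h1 h3
    simpa [Matrix.vecMul, dotProduct] using h4
  · intro π' _ hsum' hfix
    have hiter : ∀ n, Matrix.vecMul π' (A ^ n) = π' := by
      intro n
      induction n with
      | zero => simp
      | succ n ih => rw [pow_succ, ← Matrix.vecMul_vecMul, ih, hfix]
    funext j
    have h1 : Tendsto (fun n => ∑ i, π' i * (A ^ n) i j) atTop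
        (nhds (∑ i, π' i * π j)) :=
      tendsto_finset_sum Finset.univ (fun i _ => (hT j i).const_mul _)
    have h2 : (fun n => ∑ i, π' i * (A ^ n) i j) = fun _ => π' j := by
      funext n
      have := congrFun (hiter n) j
      simpa [Matrix.vecMul, dotProduct] using this
    rw [h2] at h1
    have h3 : ∑ i, π' i * π j = π j := by
      rw [← Finset.sum_mul, hsum', one_mul]
    rw [← h3]
    exact tendsto_nhds_unique tendsto_const_nhds h1
  · refine tendsto_pi_nhds.mpr fun i => tendsto_pi_nhds.mpr fun j => ?_
    exact hT j i
  · intro M hM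
    have hiter : ∀ n, A ^ n * M = M := by
      intro n
      induction n with
      | zero => simp
      | succ n ih => rw [pow_succ', mul_assoc, ih, hM]
    ext i j
    have h1 : Tendsto (fun n => ∑ k, (A ^ n) i k * M k j) atTop
        (nhds (∑ k, π k * M k j)) :=
      tendsto_finset_sum Finset.univ (fun k _ => (hT k i).mul_const _)
    have h2 : (fun n => ∑ k, (A ^ n) i k * M k j) = fun _ => M i j := by
      funext n
      have := congrFun (congrFun (hiter n) i) j
      simpa [Matrix.mul_apply] using this
    rw [h2] at h1
    have h3 : ∑ k, π k * M k j = M i j := tendsto_nhds_unique h1 tendsto_const_nhds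
    simpa [Matrix.mul_apply] using h3
end

section
/- Let μₙ,ᵢ (1 ≤ i ≤ d, n ≥ 0) be the pure point measures μₙ,ᵢ = (1/Σᵢ(n)) Σ_{m=0}^{k^{n+1}-k^n-1} fᵢ(k^n+m) δ_{m/(k^n(k-1))} on the circle 𝕋, where fᵢ satisfies the digit recursion 𝐟(km+a) = B_a 𝐟(m) and Σᵢ(n) = Σ_{m=k^n}^{k^{n+1}-1} fᵢ(m) ≠ 0. Then the vector 𝛍ₙ = (μₙ,₁,…,μₙ,_d)ᵀ satisfies the renormalisation identity 𝛍ₙ = Aₙ(δ_{1/(k^n(k-1))}) 𝛍ₙ₋₁ for n ≥ 1, where Aₙ(z) is the matrix with (i,j)-entry (Σⱼ(n-1)/Σᵢ(n))·b_{ij}(z), b_{ij}(z) being the (i,j)-entry of B(z) = Σ_a B_a z^a, and polynomials are evaluated on Dirac measures via convolution powers (δ_x)^r = δ_{rx}. -/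
open MeasureTheory Finset

section Aux

lemma mapFinsumAux {α β ι : Type*} [MeasurableSpace α] [MeasurableSpace β] (s : Finset ι)
    (μ : ι → Measure α) {g : α → β} (hg : Measurable g) :
    (∑ i ∈ s, μ i).map g = ∑ i ∈ s, (μ i).map g := by
  classical
  induction s using Finset.cons_induction with
  | empty => simp
  | cons i s hi ih => rw [Finset.sum_cons, Finset.sum_cons, Measure.map_add _ _ hg, ih]

lemma isFiniteWeightedAux {ι α : Type*} [MeasurableSpace α] (s : Finset ι) (μ : ι → Measure α)
    [∀ i, IsFiniteMeasure (μ i)] (c : ι → NNReal) :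
    IsFiniteMeasure (∑ i ∈ s, c i • μ i) := by
  classical
  induction s using Finset.cons_induction with
  | empty => rw [Finset.sum_empty]; infer_instance
  | cons i s hi ih => rw [Finset.sum_cons]; exact inferInstance

lemma diracConvWeightedAux (c : NNReal) (s : Finset ℕ) (w : ℕ → NNReal)
    (y : ℕ → AddCircle (1 : ℝ)) (x : AddCircle (1 : ℝ)) :
    Measure.conv (Measure.dirac x) (c • ∑ m ∈ s, w m • Measure.dirac (y m))
      = c • ∑ m ∈ s, w m • Measure.dirac (x + y m) := by
  haveI : IsFiniteMeasure (∑ m ∈ s, w m • Measure.dirac (y m)) :=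
    isFiniteWeightedAux s _ w
  rw [Measure.conv, Measure.dirac_prod,
    Measure.map_map (by fun_prop) (by fun_prop)]
  have : ((fun p : AddCircle (1:ℝ) × AddCircle (1:ℝ) => p.1 + p.2) ∘ Prod.mk x)
      = fun y => x + y := rfl
  rw [this, Measure.map_smul, mapFinsumAux _ _ (by fun_prop)]
  congr 1
  refine Finset.sum_congr rfl fun m _ => ?_
  rw [Measure.map_smul, Measure.map_dirac' (by fun_prop)]

lemma sumRangeMulAux {M : Type*} [AddCommMonoid M] (g : ℕ → M) (N k : ℕ) :
    ∑ m ∈ Finset.range (N * k), g m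
      = ∑ m ∈ Finset.range N, ∑ a ∈ Finset.range k, g (k * m + a) := by
  induction N with
  | zero => simp
  | succ N ih =>
    rw [Nat.succ_mul, Finset.sum_range_add, ih, Finset.sum_range_succ]
    congr 1
    exact Finset.sum_congr rfl fun a _ => by rw [mul_comm N k, add_comm]

end Aux

/-- The fundamental-region sums `Σᵢ(n) = Σ_{m=k^n}^{k^{n+1}-1} fᵢ(m)`. -/
noncomputable def regSigma {d : ℕ} (k : ℕ) (f : ℕ → Fin d → NNReal)
    (i : Fin d) (n : ℕ) : NNReal :=
  ∑ m ∈ Finset.Ico (k ^ n) (k ^ (n + 1)), f m i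

/-- The pure point approximant measures
`μₙ,ᵢ = Σᵢ(n)⁻¹ Σ_{m=0}^{k^{n+1}-k^n-1} fᵢ(k^n+m) δ_{m/(k^n(k-1))}` on the
circle `𝕋 = ℝ/ℤ`. -/
noncomputable def regMeasure {d : ℕ} (k : ℕ) (f : ℕ → Fin d → NNReal)
    (n : ℕ) (i : Fin d) : Measure (AddCircle (1 : ℝ)) :=
  (regSigma k f i n)⁻¹ •
    ∑ m ∈ Finset.range (k ^ (n + 1) - k ^ n),
      f (k ^ n + m) i •
        Measure.dirac (((m : ℝ) / ((k : ℝ) ^ n * ((k : ℝ) - 1)) : ℝ) : AddCircle (1 : ℝ))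

/-- Renormalisation identity `𝛍ₙ = Aₙ(δ_{1/(k^n(k-1))}) 𝛍ₙ₋₁`: each entry of
the vector of approximant measures satisfies
`μₙ,ᵢ = Σⱼ Σ_a (Σⱼ(n-1)/Σᵢ(n)) (B_a)ᵢⱼ (δ_{a/(k^n(k-1))} ∗ μₙ₋₁,ⱼ)`,
where `∗` is convolution of measures on the circle and the Dirac combs come
from evaluating the polynomial entries `bᵢⱼ(z)` of `B(z) = Σ_a B_a z^a` at
`δ_{1/(k^n(k-1))}` via `(δ_x)^r = δ_{rx}`. -/
theorem measure_renormalisation {d k : ℕ} (hk : 2 ≤ k)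
    (B : Fin k → Matrix (Fin d) (Fin d) NNReal)
    (f : ℕ → Fin d → NNReal)
    (hf : ∀ m : ℕ, ∀ a : Fin k, f (k * m + (a : ℕ)) = (B a).mulVec (f m))
    (hS : ∀ i n, regSigma k f i n ≠ 0) :
    ∀ n : ℕ, 1 ≤ n → ∀ i : Fin d,
      regMeasure k f n i
        = ∑ j : Fin d, (regSigma k f j (n - 1) * (regSigma k f i n)⁻¹) •
            ∑ a : Fin k, (B a i j) •
              Measure.conv
                (Measure.dirac
                  ((((a : ℕ) : ℝ) / ((k : ℝ) ^ n * ((k : ℝ) - 1)) : ℝ) : AddCircle (1 : ℝ)))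
                (regMeasure k f (n - 1) j) := by
  rintro n hn i
  obtain ⟨p, rfl⟩ : ∃ p, n = p + 1 := ⟨n - 1, (Nat.succ_pred_eq_of_pos hn).symm⟩
  simp only [Nat.add_sub_cancel]
  have hk0 : (k : ℝ) ≠ 0 := by positivity
  have hk1 : (k : ℝ) - 1 ≠ 0 := by
    have : (2 : ℝ) ≤ (k : ℝ) := by exact_mod_cast hk
    linarith
  set σ : NNReal := (regSigma k f i (p + 1))⁻¹ with hσ
  -- abbreviate points
  set D : ℝ := (k : ℝ) ^ (p + 1) * ((k : ℝ) - 1) with hD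
  set N : ℕ := k ^ (p + 1) - k ^ p with hN
  -- compute the RHS
  have hconv : ∀ (j : Fin d) (a : Fin k),
      Measure.conv
        (Measure.dirac ((((a : ℕ) : ℝ) / D : ℝ) : AddCircle (1 : ℝ)))
        (regMeasure k f p j)
      = (regSigma k f j p)⁻¹ • ∑ m ∈ Finset.range N,
          f (k ^ p + m) j •
            Measure.dirac ((((k * m + (a : ℕ) : ℕ) : ℝ) / D : ℝ) : AddCircle (1 : ℝ)) := by
    intro j a
    rw [regMeasure, diracConvWeightedAux]
    congr 1
    refine Finset.sum_congr rfl fun m _ => ?_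
    congr 2
    rw [← AddCircle.coe_add]
    congr 1
    have : (k : ℝ) ^ (p + 1) = (k : ℝ) * (k : ℝ) ^ p := by ring
    push_cast
    rw [hD, this]
    field_simp
    ring
  calc regMeasure k f (p + 1) i
      = σ • ∑ m ∈ Finset.range N, ∑ a : Fin k,
          f (k ^ (p + 1) + (k * m + (a : ℕ))) i •
            Measure.dirac ((((k * m + (a : ℕ) : ℕ) : ℝ) / D : ℝ) : AddCircle (1 : ℝ)) := by
        rw [regMeasure]
        congr 1
        have hsplit : k ^ (p + 1 + 1) - k ^ (p + 1) = N * k := by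
          rw [hN, Nat.sub_mul, ← pow_succ, ← pow_succ]
        rw [hsplit, sumRangeMulAux]
        refine Finset.sum_congr rfl fun m _ => ?_
        rw [← Fin.sum_univ_eq_sum_range]
    _ = ∑ j : Fin d, (regSigma k f j p * σ) •
          ∑ a : Fin k, (B a i j) •
            Measure.conv
              (Measure.dirac ((((a : ℕ) : ℝ) / D : ℝ) : AddCircle (1 : ℝ)))
              (regMeasure k f p j) := by
        have hcancel : ∀ j : Fin d, regSigma k f j p * (regSigma k f j p)⁻¹ = 1 :=
          fun j => mul_inv_cancel₀ (hS j p)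
        simp only [hconv]
        -- push all scalars inside
        simp only [Finset.smul_sum, smul_smul]
        rw [Finset.sum_comm]
        conv_rhs => rw [Finset.sum_comm]
        refine Finset.sum_congr rfl fun a _ => ?_
        rw [Finset.sum_comm]
        refine Finset.sum_congr rfl fun m _ => ?_
        rw [← Finset.sum_smul]
        congr 1
        have : f (k ^ (p + 1) + (k * m + (a : ℕ))) i
            = ∑ j : Fin d, B a i j * f (k ^ p + m) j := by
          have h1 : k ^ (p + 1) + (k * m + (a : ℕ)) = k * (k ^ p + m) + (a : ℕ) := by ring
          rw [h1, hf (k ^ p + m) a]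
          simp [Matrix.mulVec, dotProduct]
        rw [this, Finset.mul_sum]
        refine Finset.sum_congr rfl fun j _ => ?_
        calc σ * (B a i j * f (k ^ p + m) j)
            = (regSigma k f j p * (regSigma k f j p)⁻¹) * (σ * (B a i j * f (k ^ p + m) j)) := by
              rw [hcancel j, one_mul]
          _ = regSigma k f j p * σ * (B a i j * ((regSigma k f j p)⁻¹ * f (k ^ p + m) j)) := by
              ring
end
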